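/- For every y, t > 0, the function u ↦ −(exp(−y²/(2t))/√(2πt)) · erf((y/√(2t))·√(t−u)/√u) on (0,t) has derivative u ↦ (y·exp(−y²/(2u))/√(2πu³)) · (1/√(2π(t−u))). -/

import Mathlib

open Real

/-- The error function `erf x = (2/√π) ∫₀ˣ exp(−s²) ds`. -/
noncomputable def erf (x : ℝ) : ℝ := 2 / Real.sqrt π * ∫ s in (0:ℝ)..x, Real.exp (-s ^ 2)

lemma erf_hasDerivAt (x : ℝ) : HasDerivAt erf (2 / Real.sqrt π * Real.exp (-x ^ 2)) x := by
  have hc : Continuous fun s : ℝ => Real.exp (-s ^ 2) := by continuity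
  exact ((hc.integral_hasStrictDerivAt 0 x).hasDerivAt).const_mul (2 / Real.sqrt π)

/-- Antiderivative identity for the integrand in the Lévy–Gaussian convolution. -/
theorem hasDerivAt_erf_antiderivative (y t : ℝ) (hy : 0 < y) (ht : 0 < t) :
    ∀ u ∈ Set.Ioo (0:ℝ) t,
      HasDerivAt
        (fun u : ℝ =>
          -(Real.exp (-(y ^ 2) / (2 * t)) / Real.sqrt (2 * π * t)) *
            erf (y / Real.sqrt (2 * t) * (Real.sqrt (t - u) / Real.sqrt u)))
        ((y * Real.exp (-(y ^ 2) / (2 * u)) / Real.sqrt (2 * π * u ^ 3)) *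
          (1 / Real.sqrt (2 * π * (t - u)))) u := by
  intro u hu
  obtain ⟨hu0, hut⟩ := hu
  have htu : 0 < t - u := sub_pos.2 hut
  have ha : 0 < Real.sqrt u := Real.sqrt_pos.2 hu0
  have hb : 0 < Real.sqrt (t - u) := Real.sqrt_pos.2 htu
  have h1 : HasDerivAt (fun u : ℝ => Real.sqrt (t - u)) (-(1 / (2 * Real.sqrt (t - u)))) u := by
    have := (Real.hasDerivAt_sqrt htu.ne').comp u ((hasDerivAt_const u t).sub (hasDerivAt_id u))
    convert this using 1
    case e'_4 => rfl
    case e'_5 => rfl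
    case e'_8 => rfl
    ring
  have h2 : HasDerivAt Real.sqrt (1 / (2 * Real.sqrt u)) u := Real.hasDerivAt_sqrt hu0.ne'
  have h3 := h1.div h2 ha.ne'
  have h4 := h3.const_mul (y / Real.sqrt (2 * t))
  have h5 := erf_hasDerivAt (y / Real.sqrt (2 * t) * (Real.sqrt (t - u) / Real.sqrt u))
  have h6 := (h5.comp u h4).const_mul (-(Real.exp (-(y ^ 2) / (2 * t)) / Real.sqrt (2 * π * t)))
  convert h6 using 1
  case e'_4 => rfl
  case e'_5 => rfl
  case e'_8 => rfl
  have h2t : (0:ℝ) < 2 * t := by positivity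
  have hx : (y / Real.sqrt (2 * t) * (Real.sqrt (t - u) / Real.sqrt u)) ^ 2
      = y ^ 2 / (2 * t) * ((t - u) / u) := by
    rw [mul_pow, div_pow, div_pow, Real.sq_sqrt h2t.le, Real.sq_sqrt htu.le, Real.sq_sqrt hu0.le]
  rw [hx]
  have hexp : Real.exp (-y ^ 2 / (2 * t)) * Real.exp (-(y ^ 2 / (2 * t) * ((t - u) / u)))
      = Real.exp (-y ^ 2 / (2 * u)) := by
    rw [← Real.exp_add]
    congr 1
    field_simp
    ring
  have hs1 : Real.sqrt (2 * π * t) = Real.sqrt 2 * Real.sqrt π * Real.sqrt t := by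
    rw [Real.sqrt_mul (by positivity), Real.sqrt_mul (by norm_num)]
  have hs2 : Real.sqrt (2 * π * (t - u)) = Real.sqrt 2 * Real.sqrt π * Real.sqrt (t - u) := by
    rw [Real.sqrt_mul (by positivity), Real.sqrt_mul (by norm_num)]
  have hs3 : Real.sqrt (2 * π * u ^ 3) = Real.sqrt 2 * Real.sqrt π * (u * Real.sqrt u) := by
    rw [Real.sqrt_mul (by positivity), Real.sqrt_mul (by norm_num)]
    congr 1
    rw [show u ^ 3 = u ^ 2 * u by ring, Real.sqrt_mul (by positivity), Real.sqrt_sq hu0.le]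
  have hs4 : Real.sqrt (2 * t) = Real.sqrt 2 * Real.sqrt t := Real.sqrt_mul (by norm_num) t
  rw [hs1, hs2, hs3, hs4, ← hexp]
  have ha2 : Real.sqrt u ^ 2 = u := Real.sq_sqrt hu0.le
  have hb2 : Real.sqrt (t - u) ^ 2 = t - u := Real.sq_sqrt htu.le
  have hr2 : Real.sqrt t ^ 2 = t := Real.sq_sqrt ht.le
  have hs : (0:ℝ) < Real.sqrt 2 := Real.sqrt_pos.2 (by norm_num)
  have hp : (0:ℝ) < Real.sqrt π := Real.sqrt_pos.2 pi_pos
  have hr : (0:ℝ) < Real.sqrt t := Real.sqrt_pos.2 ht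
  field_simp
  set C := y * Real.exp (-y ^ 2 / (2 * t)) * Real.exp (-(y ^ 2 * (t - u)) / (2 * t * u)) *
      Real.sqrt 2 ^ 2 * Real.sqrt π ^ 2 * Real.sqrt u * Real.sqrt (t - u) * u * 4 with hC
  linear_combination Real.sqrt t ^ 2 * ha2 + u * hr2 - u * ha2 - u * hb2
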